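/- arXiv:1504.08196 — 2 statements merged into one kernel-verified Lean document; each statement's English description precedes it below -/
import Mathlib

section
/- For 0 < β < 1, the determinant of the n×n first-order stable spline kernel K_β with (K_β)_{ij} = β^{max(i,j)} equals (1-β)^{n-1} · β^{n(n+1)/2}. -/
open Matrix

/-- First-order stable spline (TC) kernel, `(K_β)_{ij} = β^{max(i,j)}` with 1-based indexing. -/
noncomputable def ssKernel (n : ℕ) (β : ℝ) : Matrix (Fin n) (Fin n) ℝ :=
  fun i j => β ^ (max i.val j.val + 1)

theorem stable_spline_det (n : ℕ) (β : ℝ) (hβ : 0 < β) (hβ1 : β < 1) :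
    (ssKernel n β).det = (1 - β) ^ (n - 1) * β ^ (n * (n + 1) / 2) := by
  induction n with
  | zero => simp [Matrix.det_fin_zero]
  | succ n ih =>
    match n, ih with
    | 0, _ => simp [Matrix.det_fin_one, ssKernel]
    | (m + 1), ih =>
      set n := m + 1 with hn
      set M := ssKernel (n + 1) β with hM
      -- subtract row 1 from row 0
      have key : M.det = (M.updateRow 0 (M 0 + (-1 : ℝ) • M 1)).det := by
        rw [Matrix.det_updateRow_add_smul_self M (by simp [Fin.ext_iff] : (0 : Fin (n+1)) ≠ 1)]
      set A := M.updateRow 0 (M 0 + (-1 : ℝ) • M 1) with hA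
      -- row 0 of A vanishes except at column 0
      have hrow0 : ∀ j : Fin (n + 1), j ≠ 0 → A 0 j = 0 := by
        intro j hj
        have hj1 : 1 ≤ j.val := Nat.one_le_iff_ne_zero.mpr (fun h => hj (Fin.ext h))
        simp only [hA, Matrix.updateRow_self, Pi.add_apply, Pi.smul_apply, hM, ssKernel]
        have h0 : max (0 : ℕ) j.val = j.val := by omega
        have h1 : max (1 : ℕ) j.val = j.val := by omega
        have h1mod : 1 % (n + 1) = 1 := Nat.mod_eq_of_lt (by omega)
        simp [h0, h1, h1mod]
      have hA00 : A 0 0 = β - β ^ 2 := by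
        simp only [hA, Matrix.updateRow_self, Pi.add_apply, Pi.smul_apply, hM, ssKernel]
        have h1mod : 1 % (n + 1) = 1 := Nat.mod_eq_of_lt (by omega)
        norm_num
        rw [h1mod]
        ring
      -- the minor is β • ssKernel n β
      have hminor : A.submatrix Fin.succ Fin.succ = β • ssKernel n β := by
        ext i j
        simp only [Fin.succAbove_zero, Matrix.submatrix_apply, hA,
          Matrix.updateRow_apply, hM, ssKernel, Matrix.smul_apply, smul_eq_mul]
        rw [if_neg (Fin.succ_ne_zero i)]
        have : max (i.succ.val) (j.succ.val) = max i.val j.val + 1 := by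
          simp [Fin.val_succ]
        rw [this, pow_succ]
        ring
      -- cofactor expansion along row 0
      have hdet : A.det = (β - β ^ 2) * (β • ssKernel n β).det := by
        rw [Matrix.det_succ_row_zero]
        rw [Finset.sum_eq_single (0 : Fin (n + 1))]
        · simp [Fin.succAbove_zero, hA00, hminor]
        · intro j _ hj
          rw [hrow0 j hj]; ring
        · intro h; exact absurd (Finset.mem_univ _) h
      have hsmul : (β • ssKernel n β).det = β ^ n * (ssKernel n β).det := by
        rw [Matrix.det_smul]; simp
      rw [key, hdet, hsmul, ih]
      have hexp : (n + 1) * (n + 1 + 1) / 2 = n * (n + 1) / 2 + (n + 1) := by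
        have h1 : (n + 1) * (n + 1 + 1) = n * (n + 1) + 2 * (n + 1) := by ring
        rw [h1, Nat.add_mul_div_left _ _ (by norm_num : 0 < 2)]
      rw [hexp]
      have hβn : β - β ^ 2 = β * (1 - β) := by ring
      have hn1 : n + 1 - 1 = n := rfl
      have hnm : n - 1 + 1 = n := by omega
      rw [hn1, hβn, pow_add]
      rw [show (1 - β) ^ n = (1 - β) ^ (n - 1) * (1 - β) by rw [← pow_succ, hnm]]
      ring
end

section
/- For 0 < β < 1, the first-order stable spline kernel matrix K_β with (K_β)_{ij} = β^{max(i,j)} is positive definite. -/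
open Matrix

/-- Telescoping sum. -/
lemma ss_telescope (β : ℝ) (m n : ℕ) (h : m ≤ n) :
    ∑ k ∈ Finset.Ico m n, (β ^ (k + 1) - β ^ (k + 2)) = β ^ (m + 1) - β ^ (n + 1) := by
  induction n, h using Nat.le_induction with
  | base => simp
  | succ n hmn ih =>
    rw [Finset.sum_Ico_succ_top hmn, ih]
    ring

theorem stable_spline_posDef (n : ℕ) (hn : 1 ≤ n) (β : ℝ) (hβ : 0 < β) (hβ1 : β < 1) :
    (ssKernel n β).PosDef := by
  rw [Matrix.posDef_iff_dotProduct_mulVec]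
  constructor
  · ext i j
    simp [ssKernel, Matrix.conjTranspose, max_comm]
  intro x hx
  -- partial sums
  set T : ℕ → ℝ := fun k => ∑ i : Fin n, if i.val ≤ k then x i else 0 with hT
  -- key pointwise identity
  have key : ∀ i j : Fin n, (β : ℝ) ^ (max i.val j.val + 1)
      = (∑ k ∈ Finset.range n, if i.val ≤ k ∧ j.val ≤ k then β ^ (k + 1) - β ^ (k + 2) else 0)
        + β ^ (n + 1) := by
    intro i j
    have h1 : ∀ k, (i.val ≤ k ∧ j.val ≤ k) ↔ max i.val j.val ≤ k := by
      intro k; exact (max_le_iff).symm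
    calc (β : ℝ) ^ (max i.val j.val + 1)
        = (β ^ (max i.val j.val + 1) - β ^ (n + 1)) + β ^ (n + 1) := by ring
      _ = (∑ k ∈ Finset.Ico (max i.val j.val) n, (β ^ (k + 1) - β ^ (k + 2))) + β ^ (n + 1) := by
          rw [ss_telescope β _ n (le_of_lt (max_lt i.isLt j.isLt))]
      _ = (∑ k ∈ Finset.range n, if i.val ≤ k ∧ j.val ≤ k then β ^ (k + 1) - β ^ (k + 2) else 0)
            + β ^ (n + 1) := by
          congr 1
          rw [← Finset.sum_filter]
          congr 1
          ext k
          simp only [Finset.mem_filter, Finset.mem_range, Finset.mem_Ico, h1 k]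
          constructor
          · rintro ⟨h2, h3⟩; exact ⟨h3, h2⟩
          · rintro ⟨h2, h3⟩; exact ⟨h3, h2⟩
  -- compute the quadratic form
  have quad : dotProduct (star x) (ssKernel n β *ᵥ x)
      = (∑ k ∈ Finset.range n, (β ^ (k + 1) - β ^ (k + 2)) * (T k * T k))
        + β ^ (n + 1) * ((∑ i : Fin n, x i) * (∑ i : Fin n, x i)) := by
    have h0 : dotProduct (star x) (ssKernel n β *ᵥ x)
        = ∑ i : Fin n, ∑ j : Fin n, x i * (β ^ (max i.val j.val + 1) * x j) := by
      simp [dotProduct, Matrix.mulVec, ssKernel, Finset.mul_sum]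
    rw [h0]
    have step : ∀ i j : Fin n, x i * (β ^ (max i.val j.val + 1) * x j)
        = (∑ k ∈ Finset.range n,
            (β ^ (k + 1) - β ^ (k + 2)) * ((if i.val ≤ k then x i else 0)
              * (if j.val ≤ k then x j else 0)))
          + β ^ (n + 1) * (x i * x j) := by
      intro i j
      rw [key i j, add_mul, mul_add]
      congr 1
      · rw [Finset.sum_mul, Finset.mul_sum]
        apply Finset.sum_congr rfl
        intro k _
        by_cases h1 : i.val ≤ k <;> by_cases h2 : j.val ≤ k <;> simp [h1, h2] <;> ring
      · ring
    simp only [step, Finset.sum_add_distrib]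
    congr 1
    · -- triple sum rearrangement
      calc ∑ i : Fin n, ∑ j : Fin n, ∑ k ∈ Finset.range n,
              (β ^ (k + 1) - β ^ (k + 2)) * ((if i.val ≤ k then x i else 0)
                * (if j.val ≤ k then x j else 0))
          = ∑ i : Fin n, ∑ k ∈ Finset.range n, ∑ j : Fin n,
              (β ^ (k + 1) - β ^ (k + 2)) * ((if i.val ≤ k then x i else 0)
                * (if j.val ≤ k then x j else 0)) :=
            Finset.sum_congr rfl (fun i _ => Finset.sum_comm)
        _ = ∑ k ∈ Finset.range n, ∑ i : Fin n, ∑ j : Fin n,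
              (β ^ (k + 1) - β ^ (k + 2)) * ((if i.val ≤ k then x i else 0)
                * (if j.val ≤ k then x j else 0)) := Finset.sum_comm
        _ = ∑ k ∈ Finset.range n, (β ^ (k + 1) - β ^ (k + 2)) * (T k * T k) := by
            apply Finset.sum_congr rfl
            intro k _
            simp_rw [← Finset.mul_sum, ← Finset.sum_mul]
            rfl
    · simp_rw [← Finset.mul_sum, ← Finset.sum_mul]
  rw [quad]
  -- nonnegativity of each term
  have hd : ∀ k, (0:ℝ) < β ^ (k + 1) - β ^ (k + 2) := by
    intro k
    have : β ^ (k + 2) < β ^ (k + 1) :=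
      pow_lt_pow_right_of_lt_one₀ hβ hβ1 (by omega)
    linarith
  -- some partial sum is nonzero
  have hTnz : ∃ k ∈ Finset.range n, T k ≠ 0 := by
    by_contra hcon
    push_neg at hcon
    apply hx
    have hall : ∀ m : ℕ, ∀ i : Fin n, i.val = m → x i = 0 := by
      intro m
      induction m using Nat.strong_induction_on with
      | _ m ih =>
      intro i him
      subst him
      have hTi : T i.val = 0 := hcon i.val (Finset.mem_range.mpr i.isLt)
      have : T i.val = x i + ∑ j ∈ Finset.univ.erase i, if j.val ≤ i.val then x j else 0 := by
        simp only [hT]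
        rw [← Finset.add_sum_erase _ _ (Finset.mem_univ i)]
        simp
      have hrest : ∑ j ∈ Finset.univ.erase i, (if j.val ≤ i.val then x j else 0) = 0 := by
        apply Finset.sum_eq_zero
        intro j hj
        by_cases hle : j.val ≤ i.val
        · have hlt : j < i := by
            rcases lt_or_eq_of_le hle with h | h
            · exact h
            · exact absurd (Fin.ext h) (Finset.mem_erase.mp hj).1
          simp [hle, ih j hlt]
        · simp [hle]
      rw [hrest, add_zero] at this
      rw [← this, hTi]
    funext i
    exact hall i.val i rfl
  obtain ⟨k0, hk0, hk0ne⟩ := hTnz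
  have hpos : 0 < ∑ k ∈ Finset.range n, (β ^ (k + 1) - β ^ (k + 2)) * (T k * T k) := by
    apply Finset.sum_pos'
    · intro k _
      exact mul_nonneg (le_of_lt (hd k)) (mul_self_nonneg _)
    · exact ⟨k0, hk0, mul_pos (hd k0) (mul_self_pos.mpr hk0ne)⟩
  have h2 : (0:ℝ) ≤ β ^ (n + 1) * ((∑ i : Fin n, x i) * (∑ i : Fin n, x i)) :=
    mul_nonneg (le_of_lt (pow_pos hβ _)) (mul_self_nonneg _)
  exact add_pos_of_pos_of_nonneg hpos h2
end
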